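/- arXiv:2505.11689 — 4 statements merged into one kernel-verified Lean document; each statement's English description precedes it below -/
import Mathlib

section
/- There exist constants a* > 0 and C > 0 such that for all 0 < a < a*, the diameter of Π_a = {u ∈ V : η(u|u_L) - a·η(u|u_R) ≤ 0} satisfies diam(Π_a) ≤ C√a. -/
open Set


lemma taylor_aux2 {E : Type*} [NormedAddCommGroup E] [NormedSpace ℝ E]
    (η : E → ℝ) (hη : ContDiff ℝ 2 η) (p d : E) (m : ℝ)
    (hm : ∀ t ∈ Set.Icc (0:ℝ) 1, m ≤ fderiv ℝ (fderiv ℝ η) (p + t • d) d d) :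
    m / 2 ≤ η (p + d) - η p - fderiv ℝ η p d := by
  have hη1 : ContDiff ℝ 1 (fderiv ℝ η) := hη.fderiv_right (by norm_num)
  have hd : Differentiable ℝ η := hη.differentiable (by norm_num)
  have hd1 : Differentiable ℝ (fderiv ℝ η) := hη1.differentiable one_ne_zero
  set L : ℝ → E := fun t => p + t • d with hLdef
  have hLder : ∀ t : ℝ, HasDerivAt L d t := fun t => by
    exact (((hasDerivAt_id t).smul_const d).const_add p).congr_deriv (one_smul ℝ d)
  set φ : ℝ → ℝ := fun t => η (L t) with hφdef
  set Φ : ℝ → ℝ := fun t => fderiv ℝ η (L t) d with hΦdef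
  have hφ : ∀ t, HasDerivAt φ (Φ t) t := fun t => by
    exact ((hd (L t)).hasFDerivAt).comp_hasDerivAt t (hLder t)
  have hΦ : ∀ t, HasDerivAt Φ (fderiv ℝ (fderiv ℝ η) (L t) d d) t := fun t => by
    have h1 : HasDerivAt (fun s => fderiv ℝ η (L s)) (fderiv ℝ (fderiv ℝ η) (L t) d) t :=
      ((hd1 (L t)).hasFDerivAt).comp_hasDerivAt t (hLder t)
    have h2 := ((ContinuousLinearMap.apply ℝ ℝ d).hasFDerivAt).comp_hasDerivAt t h1
    exact h2
  set χ : ℝ → ℝ := fun t => Φ t - m * t with hχdef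
  have hχder : ∀ t, HasDerivAt χ (fderiv ℝ (fderiv ℝ η) (L t) d d - m) t := fun t => by
    have := (hΦ t).sub ((hasDerivAt_id t).const_mul m)
    exact this.congr_deriv (by ring)
  have hχmono : MonotoneOn χ (Icc 0 1) := by
    apply monotoneOn_of_deriv_nonneg (convex_Icc 0 1)
    · exact fun t _ => ((hχder t).continuousAt).continuousWithinAt
    · exact fun t _ => ((hχder t).differentiableAt).differentiableWithinAt
    · intro t ht
      rw [interior_Icc] at ht
      rw [(hχder t).deriv]
      have := hm t (Ioo_subset_Icc_self ht)
      linarith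
  set ψ : ℝ → ℝ := fun t => φ t - t * Φ 0 - m / 2 * t ^ 2 with hψdef
  have hψder : ∀ t, HasDerivAt ψ (Φ t - Φ 0 - m * t) t := fun t => by
    have h1 : HasDerivAt (fun s : ℝ => s * Φ 0) (Φ 0) t := by
      simpa using (hasDerivAt_id t).mul_const (Φ 0)
    have h2 : HasDerivAt (fun s : ℝ => m / 2 * s ^ 2) (m * t) t := by
      have := (hasDerivAt_pow 2 t).const_mul (m / 2)
      exact this.congr_deriv (by rw [show (2:ℕ) - 1 = 1 from rfl, pow_one]; push_cast; ring)
    exact ((hφ t).sub h1).sub h2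
  have hψmono : MonotoneOn ψ (Icc 0 1) := by
    apply monotoneOn_of_deriv_nonneg (convex_Icc 0 1)
    · exact fun t _ => ((hψder t).continuousAt).continuousWithinAt
    · exact fun t _ => ((hψder t).differentiableAt).differentiableWithinAt
    · intro t ht
      rw [interior_Icc] at ht
      rw [(hψder t).deriv]
      have h0 : χ 0 ≤ χ t := hχmono (left_mem_Icc.2 zero_le_one)
        (Ioo_subset_Icc_self ht) ht.1.le
      simp only [hχdef, mul_zero, sub_zero] at h0
      linarith
  have hkey : ψ 0 ≤ ψ 1 :=
    hψmono (left_mem_Icc.2 zero_le_one) (right_mem_Icc.2 zero_le_one) zero_le_one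
  have hL0 : L 0 = p := by simp [hLdef]
  have hL1 : L 1 = p + d := by simp [hLdef]
  simp only [hψdef, hφdef, hΦdef, hL0, hL1, one_pow, mul_one, one_mul, zero_mul,
    mul_zero, sub_zero, zero_pow, pow_two] at hkey
  linarith

set_option maxHeartbeats 800000 in
/-- Asymptotics of Π_a: there are a*, C > 0 with diam(Π_a) ≤ C √a for all 0 < a < a*. -/
theorem stmt_3 (n : ℕ) (V : Set (EuclideanSpace ℝ (Fin n)))
    (hVcomp : IsCompact V) (hVconv : Convex ℝ V)
    (η : EuclideanSpace ℝ (Fin n) → ℝ) (hη : ContDiff ℝ 2 η)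
    (hHess : ∀ v ∈ V, ∀ x : EuclideanSpace ℝ (Fin n), x ≠ 0 →
      0 < fderiv ℝ (fun w => fderiv ℝ η w x) v x)
    (uL uR : EuclideanSpace ℝ (Fin n)) (hL : uL ∈ V) (hR : uR ∈ V) (hLR : uL ≠ uR) :
    ∃ astar C : ℝ, 0 < astar ∧ 0 < C ∧ ∀ a : ℝ, 0 < a → a < astar →
      Metric.diam {u ∈ V |
        (η u - η uL - fderiv ℝ η uL (u - uL))
          - a * (η u - η uR - fderiv ℝ η uR (u - uR)) ≤ 0}
        ≤ C * Real.sqrt a := by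
  rcases Nat.eq_zero_or_pos n with hn | hn
  · subst hn
    exact absurd (PiLp.ext fun i => Fin.elim0 i) hLR
  have hη1 : ContDiff ℝ 1 (fderiv ℝ η) := hη.fderiv_right (by norm_num)
  -- uniform strong convexity constant
  obtain ⟨m, hm, hlow⟩ : ∃ m : ℝ, 0 < m ∧ ∀ v ∈ V, ∀ d : EuclideanSpace ℝ (Fin n),
      m * ‖d‖ ^ 2 ≤ fderiv ℝ (fderiv ℝ η) v d d := by
    have hBcont : Continuous (fderiv ℝ (fderiv ℝ η)) := hη1.continuous_fderiv one_ne_zero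
    have hQcont : Continuous fun p : EuclideanSpace ℝ (Fin n) × EuclideanSpace ℝ (Fin n) =>
        fderiv ℝ (fderiv ℝ η) p.1 p.2 p.2 := by
      have h1 : Continuous fun p : EuclideanSpace ℝ (Fin n) × EuclideanSpace ℝ (Fin n) =>
          (fderiv ℝ (fderiv ℝ η) p.1) p.2 :=
        isBoundedBilinearMap_apply.continuous.comp
          ((hBcont.comp continuous_fst).prodMk continuous_snd)
      exact isBoundedBilinearMap_apply.continuous.comp (h1.prodMk continuous_snd)
    have hHess' : ∀ v ∈ V, ∀ x : EuclideanSpace ℝ (Fin n), x ≠ 0 →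
        0 < fderiv ℝ (fderiv ℝ η) v x x := by
      intro v hv x hx
      have h := hHess v hv x hx
      rw [fderiv_clm_apply (hη1.differentiable one_ne_zero v) (differentiableAt_const x)] at h
      simpa using h
    have hx1 : (EuclideanSpace.single (⟨0, hn⟩ : Fin n) (1:ℝ)) ∈
        Metric.sphere (0 : EuclideanSpace ℝ (Fin n)) 1 := by
      rw [mem_sphere_zero_iff_norm, EuclideanSpace.norm_single]
      norm_num
    obtain ⟨⟨v0, x0⟩, hK0, hmin⟩ :=
      (hVcomp.prod (isCompact_sphere (0 : EuclideanSpace ℝ (Fin n)) 1)).exists_isMinOn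
        ⟨(uL, _), Set.mk_mem_prod hL hx1⟩ hQcont.continuousOn
    have hx0 : x0 ≠ 0 := by
      intro h
      have h2 := hK0.2
      rw [mem_sphere_zero_iff_norm, h, norm_zero] at h2
      exact one_ne_zero h2.symm
    refine ⟨fderiv ℝ (fderiv ℝ η) v0 x0 x0, hHess' v0 hK0.1 x0 hx0, ?_⟩
    intro v hv d
    rcases eq_or_ne d 0 with rfl | hd
    · simp
    · have hxd : (0:ℝ) < ‖d‖ := norm_pos_iff.2 hd
      have hsph : (‖d‖⁻¹ • d) ∈ Metric.sphere (0 : EuclideanSpace ℝ (Fin n)) 1 := by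
        rw [mem_sphere_zero_iff_norm, norm_smul, norm_inv, norm_norm,
          inv_mul_cancel₀ hxd.ne']
      have h1 : fderiv ℝ (fderiv ℝ η) v0 x0 x0 ≤
          fderiv ℝ (fderiv ℝ η) v (‖d‖⁻¹ • d) (‖d‖⁻¹ • d) :=
        isMinOn_iff.1 hmin (v, ‖d‖⁻¹ • d) (Set.mk_mem_prod hv hsph)
      have h2 : fderiv ℝ (fderiv ℝ η) v (‖d‖⁻¹ • d) (‖d‖⁻¹ • d) =
          ‖d‖⁻¹ * (‖d‖⁻¹ * fderiv ℝ (fderiv ℝ η) v d d) := by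
        simp [map_smul]
      rw [h2] at h1
      have h3 := mul_le_mul_of_nonneg_right h1 (sq_nonneg ‖d‖)
      have h4 : ‖d‖⁻¹ * (‖d‖⁻¹ * fderiv ℝ (fderiv ℝ η) v d d) * ‖d‖ ^ 2 =
          fderiv ℝ (fderiv ℝ η) v d d := by
        rw [pow_two]
        field_simp
      linarith
  -- strong convexity bound
  have hsc : ∀ u ∈ V, m / 2 * ‖u - uL‖ ^ 2 ≤ η u - η uL - fderiv ℝ η uL (u - uL) := by
    intro u hu
    have key := taylor_aux2 η hη uL (u - uL) (m * ‖u - uL‖ ^ 2) ?_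
    · rw [add_sub_cancel] at key
      linarith
    · intro t ht
      have hseg : uL + t • (u - uL) ∈ V := by
        have h := hVconv hL hu (by linarith [ht.2] : (0:ℝ) ≤ 1 - t) ht.1 (by ring)
        have heq : (1 - t) • uL + t • u = uL + t • (u - uL) := by module
        rwa [heq] at h
      exact hlow _ hseg (u - uL)
  -- maximum of the relative entropy w.r.t. uR on V
  obtain ⟨M, hM, hMb⟩ : ∃ M : ℝ, 0 < M ∧ ∀ x ∈ V,
      η x - η uR - fderiv ℝ η uR (x - uR) ≤ M := by
    have hgcont : Continuous fun u => η u - η uR - fderiv ℝ η uR (u - uR) :=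
      (hη.continuous.sub continuous_const).sub
        ((fderiv ℝ η uR).continuous.comp (continuous_id.sub continuous_const))
    obtain ⟨z, hz, hzmax⟩ := hVcomp.exists_isMaxOn ⟨uL, hL⟩ hgcont.continuousOn
    exact ⟨max (η z - η uR - fderiv ℝ η uR (z - uR)) 1,
      lt_of_lt_of_le one_pos (le_max_right _ _),
      fun x hx => le_trans (isMaxOn_iff.1 hzmax x hx) (le_max_left _ _)⟩
  have h2Mm : (0:ℝ) < 2 * M / m := div_pos (by linarith) hm
  refine ⟨1, 2 * Real.sqrt (2 * M / m), one_pos,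
    mul_pos two_pos (Real.sqrt_pos.2 h2Mm), ?_⟩
  intro a ha ha1
  have hCa : (0:ℝ) ≤ Real.sqrt (2 * M / m) * Real.sqrt a :=
    mul_nonneg (Real.sqrt_nonneg _) (Real.sqrt_nonneg _)
  apply Metric.diam_le_of_forall_dist_le (by linarith)
  intro u hu w hw
  have hbd : ∀ x, x ∈ {u ∈ V |
        (η u - η uL - fderiv ℝ η uL (u - uL))
          - a * (η u - η uR - fderiv ℝ η uR (u - uR)) ≤ 0} →
      dist x uL ≤ Real.sqrt (2 * M / m) * Real.sqrt a := by
    rintro x ⟨hxV, hxle⟩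
    have h1 := hsc x hxV
    have h2 := hMb x hxV
    have h3 : η x - η uL - fderiv ℝ η uL (x - uL) ≤ a * M := by
      nlinarith [mul_le_mul_of_nonneg_left h2 ha.le]
    have h4 : ‖x - uL‖ ^ 2 ≤ 2 * M / m * a := by
      rw [div_mul_eq_mul_div, le_div_iff₀ hm]
      nlinarith
    rw [dist_eq_norm]
    have h5 : ‖x - uL‖ ≤ Real.sqrt (2 * M / m * a) :=
      (Real.le_sqrt (norm_nonneg _) (by positivity)).2 h4
    rwa [Real.sqrt_mul h2Mm.le] at h5
  calc dist u w ≤ dist u uL + dist w uL := dist_triangle_right _ _ _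
    _ ≤ Real.sqrt (2 * M / m) * Real.sqrt a + Real.sqrt (2 * M / m) * Real.sqrt a :=
        add_le_add (hbd u hu) (hbd w hw)
    _ = 2 * Real.sqrt (2 * M / m) * Real.sqrt a := by ring
end

section
/- Let u_L > 0 and u_R > u_L be fixed. Define η'' : ℝ → ℝ by η''(x) = 1 for x ≤ 0, η''(x) = ((δ-1)/u_L)x + 1 for 0 ≤ x ≤ u_L, and η''(x) = δ for x ≥ u_L, where 0 < δ < 1. Then for any C² function η̄ with this second derivative: (1) η̄ is strictly convex; (2) the relative entropy satisfies ∂_v η̄(u|v) = -η̄''(v)(u - v), so ∂_v η̄(u|v) > 0 for v > u and ∂_v η̄(u|v) < 0 for v < u; (3) η̄(u_L|u_R) = (δ/2)(u_L - u_R)². -/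
/-- Properties of the tailored entropy η̄ whose second derivative is the piecewise
function equal to 1 on (-∞,0], affine on [0,u_L] and δ on [u_L,∞):
(1) η̄ is strictly convex; (2) ∂_v η̄(u|v) = -η̄''(v)(u-v) with the stated signs;
(3) η̄(u_L|u_R) = (δ/2)(u_L-u_R)². -/
theorem stmt_7 (uL uR δ : ℝ) (huL : 0 < uL) (huR : uL < uR) (hδ0 : 0 < δ) (hδ1 : δ < 1)
    (ηpp : ℝ → ℝ)
    (hηpp : ηpp = fun x => if x ≤ 0 then 1 else if x ≤ uL then ((δ - 1) / uL) * x + 1 else δ)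
    (ηb : ℝ → ℝ) (hC2 : ContDiff ℝ 2 ηb) (hdd : deriv (deriv ηb) = ηpp) :
    StrictConvexOn ℝ Set.univ ηb ∧
    (∀ u v : ℝ,
      deriv (fun w => ηb u - ηb w - deriv ηb w * (u - w)) v = -(ηpp v) * (u - v) ∧
      (v > u → 0 < deriv (fun w => ηb u - ηb w - deriv ηb w * (u - w)) v) ∧
      (v < u → deriv (fun w => ηb u - ηb w - deriv ηb w * (u - w)) v < 0)) ∧
    ηb uL - ηb uR - deriv ηb uR * (uL - uR) = (δ / 2) * (uL - uR) ^ 2 := by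
  have huLR : uL ≤ uR := le_of_lt huR
  have hC2' : ContDiff ℝ ((1 : ℕ∞) + 1) ηb := by exact_mod_cast hC2
  obtain ⟨hdiff, -, hC1⟩ := contDiff_succ_iff_deriv.mp hC2'
  have hdiff' : Differentiable ℝ (deriv ηb) := hC1.differentiable (by simp)
  have hpos : ∀ x : ℝ, 0 < ηpp x := by
    intro x
    rw [hηpp]
    by_cases h1 : x ≤ 0
    · simp [h1]
    · push_neg at h1
      by_cases h2 : x ≤ uL
      · simp only [not_le.mpr h1, if_false, h2, if_true]
        have he : (δ - 1) / uL * x + 1 = ((δ - 1) * x + uL) / uL := by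
          field_simp
        rw [he]
        apply div_pos _ huL
        nlinarith
      · simp [not_le.mpr h1, h2, hδ0]
  have key : ∀ u v : ℝ, HasDerivAt (fun w => ηb u - ηb w - deriv ηb w * (u - w))
      (-(ηpp v) * (u - v)) v := by
    intro u v
    have h1 : HasDerivAt ηb (deriv ηb v) v := (hdiff v).hasDerivAt
    have h2 : HasDerivAt (deriv ηb) (ηpp v) v := by
      have h := (hdiff' v).hasDerivAt
      rwa [hdd] at h
    have h3 : HasDerivAt (fun w : ℝ => u - w) (-1) v := by
      exact ((hasDerivAt_const v u).sub (hasDerivAt_id v)).congr_deriv (by ring)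
    have h5 := ((hasDerivAt_const v (ηb u)).sub h1).sub (h2.mul h3)
    exact h5.congr_deriv (by ring)
  refine ⟨?_, ?_, ?_⟩
  · apply strictConvexOn_of_deriv2_pos convex_univ hC2.continuous.continuousOn
    intro x _
    have h : deriv^[2] ηb = deriv (deriv ηb) := rfl
    rw [h, hdd]
    exact hpos x
  · intro u v
    have hd := (key u v).deriv
    refine ⟨hd, ?_, ?_⟩
    · intro hv; rw [hd]; nlinarith [hpos v]
    · intro hv; rw [hd]; nlinarith [hpos v]
  · have heq : ∀ x ∈ Set.uIcc uL uR, ηpp x = δ := by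
      intro x hx
      rw [Set.uIcc_of_le huLR] at hx
      have hx1 : uL ≤ x := hx.1
      have hne : ¬ x ≤ 0 := by linarith
      rw [hηpp]
      simp only [hne, if_false]
      by_cases h2 : x ≤ uL
      · have hxe : x = uL := le_antisymm h2 hx1
        rw [if_pos h2, hxe]
        field_simp
        ring
      · simp [h2]
    have hint : IntervalIntegrable (fun x => δ * (x - uL)) MeasureTheory.volume uL uR :=
      Continuous.intervalIntegrable (by continuity) _ _
    have hFTC1 : ∫ x in uL..uR, δ * (x - uL) =
        (ηb uL - ηb uR - deriv ηb uR * (uL - uR)) -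
          (ηb uL - ηb uL - deriv ηb uL * (uL - uL)) := by
      apply intervalIntegral.integral_eq_sub_of_hasDerivAt _ hint
      intro x hx
      have h := key uL x
      rw [heq x hx] at h
      have he : δ * (x - uL) = -δ * (uL - x) := by ring
      rw [he]
      exact h
    have hFTC2 : ∫ x in uL..uR, δ * (x - uL) =
        δ / 2 * (uR - uL) ^ 2 - δ / 2 * (uL - uL) ^ 2 := by
      apply intervalIntegral.integral_eq_sub_of_hasDerivAt _ hint
      intro x hx
      have h : HasDerivAt (fun w : ℝ => δ / 2 * (w - uL) ^ 2)
          (δ / 2 * ((2 : ℕ) * (x - uL) ^ 1 * 1)) x :=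
        (((hasDerivAt_id x).sub_const uL).pow 2).const_mul (δ / 2)
      exact h.congr_deriv (by push_cast; ring)
    have h := hFTC1.symm.trans hFTC2
    linear_combination h
end

section
/- With η̄ as constructed (η̄''(x) = 1 for x ≤ 0, linear interpolation to δ on [0, u_L], δ for x ≥ u_L), for any state w < -2u_L one has η̄(u_L | w) ≥ η̄(0 | w) ≥ (1/2)w², and consequently if δ < w²/(u_L - u_R)² then η̄(u_L|u_R) < η̄(u_L|w). -/
lemma rel_int (ηb ηpp : ℝ → ℝ) (hC2 : ContDiff ℝ 2 ηb) (hdd : deriv (deriv ηb) = ηpp)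
    (hc : Continuous ηpp) (u v : ℝ) :
    ηb u - ηb v - deriv ηb v * (u - v) = ∫ s in v..u, (u - s) * ηpp s := by
  have h1 : ContDiff ℝ 1 (deriv ηb) := by
    have := (contDiff_succ_iff_deriv (n := 1)).mp (by norm_num at hC2 ⊢; exact hC2)
    exact this.2.2
  have hg : ∀ x : ℝ, HasDerivAt (fun t => ηb u - ηb t - deriv ηb t * (u - t))
      (-((u - x) * ηpp x)) x := by
    intro x
    have hb : HasDerivAt ηb (deriv ηb x) x :=
      (hC2.differentiable (by norm_num) x).hasDerivAt
    have hb' : HasDerivAt (deriv ηb) (ηpp x) x := by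
      rw [← hdd]; exact ((h1.differentiable one_ne_zero) x).hasDerivAt
    have hlin : HasDerivAt (fun t : ℝ => u - t) (0 - 1) x :=
      (hasDerivAt_const x u).sub (hasDerivAt_id x)
    have := ((hasDerivAt_const x (ηb u)).sub hb).sub (hb'.mul hlin)
    exact this.congr_deriv (by ring)
  have hint : IntervalIntegrable (fun s => -((u - s) * ηpp s)) MeasureTheory.volume v u :=
    (((continuous_const.sub continuous_id).mul hc).neg).intervalIntegrable v u
  have key := intervalIntegral.integral_eq_sub_of_hasDerivAt (fun x _ => hg x) hint
  simp only [sub_self, mul_zero, sub_zero] at key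
  rw [intervalIntegral.integral_neg] at key
  linarith [key]

/-- For the tailored entropy η̄: for any w < -2u_L,
η̄(u_L|w) ≥ η̄(0|w) ≥ w²/2, and if δ < w²/(u_L-u_R)² then η̄(u_L|u_R) < η̄(u_L|w). -/
theorem stmt_8 (uL uR δ : ℝ) (huL : 0 < uL) (huR : uL < uR) (hδ0 : 0 < δ) (hδ1 : δ < 1)
    (ηpp : ℝ → ℝ)
    (hηpp : ηpp = fun x => if x ≤ 0 then 1 else if x ≤ uL then ((δ - 1) / uL) * x + 1 else δ)
    (ηb : ℝ → ℝ) (hC2 : ContDiff ℝ 2 ηb) (hdd : deriv (deriv ηb) = ηpp) :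
    ∀ w : ℝ, w < -2 * uL →
      (ηb uL - ηb w - deriv ηb w * (uL - w) ≥ ηb 0 - ηb w - deriv ηb w * (0 - w)) ∧
      (ηb 0 - ηb w - deriv ηb w * (0 - w) ≥ w ^ 2 / 2) ∧
      (δ < w ^ 2 / (uL - uR) ^ 2 →
        ηb uL - ηb uR - deriv ηb uR * (uL - uR) < ηb uL - ηb w - deriv ηb w * (uL - w)) := by
  have hc : Continuous ηpp := by
    rw [← hdd]
    have h1 : ContDiff ℝ 1 (deriv ηb) := by
      have := (contDiff_succ_iff_deriv (n := 1)).mp (by norm_num at hC2 ⊢; exact hC2)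
      exact this.2.2
    have := (contDiff_succ_iff_deriv (n := 0)).mp (by norm_num at h1 ⊢; exact h1)
    exact this.2.2.continuous
  have hppnn : ∀ s : ℝ, 0 ≤ ηpp s := by
    intro s
    rw [hηpp]; dsimp only
    split_ifs with h1 h2
    · norm_num
    · push_neg at h1
      have : (δ - 1) / uL * s + 1 = ((δ - 1) * s + uL) / uL := by field_simp
      rw [this]
      apply div_nonneg _ huL.le
      nlinarith
    · linarith
  intro w hw
  have hw0 : w < 0 := by linarith
  have FuLw := rel_int ηb ηpp hC2 hdd hc uL w
  have F0w := rel_int ηb ηpp hC2 hdd hc 0 w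
  have FuLuR := rel_int ηb ηpp hC2 hdd hc uL uR
  -- value of F(0,w)
  have e0 : (∫ s in w..(0:ℝ), (0 - s) * ηpp s) = w ^ 2 / 2 := by
    rw [intervalIntegral.integral_congr (g := fun s => 0 - s)
      (by
        intro s hs
        rw [Set.uIcc_of_le hw0.le] at hs
        rw [hηpp]; dsimp only
        rw [if_pos hs.2, mul_one])]
    simp only [zero_sub]
    rw [intervalIntegral.integral_neg, integral_id]
    ring
  -- value of F(uL,uR)
  have eR : (∫ s in uR..uL, (uL - s) * ηpp s) = δ * (uL - uR) ^ 2 / 2 := by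
    rw [intervalIntegral.integral_congr (g := fun s => (uL - s) * δ)
      (by
        intro s hs
        rw [Set.uIcc_of_ge huR.le] at hs
        rw [hηpp]; dsimp only
        rw [if_neg (by push_neg; linarith [hs.1])]
        split_ifs with h
        · have hs' : s = uL := le_antisymm h hs.1
          rw [hs']; field_simp; ring
        · rfl)]
    rw [intervalIntegral.integral_mul_const]
    rw [intervalIntegral.integral_sub intervalIntegrable_const intervalIntegral.intervalIntegrable_id]
    rw [intervalIntegral.integral_const, integral_id]
    simp only [smul_eq_mul]
    ring
  -- split and compare
  have hcont : Continuous fun s => (uL - s) * ηpp s :=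
    (continuous_const.sub continuous_id).mul hc
  have hsplit : (∫ s in w..uL, (uL - s) * ηpp s)
      = (∫ s in w..(0:ℝ), (uL - s) * ηpp s) + ∫ s in (0:ℝ)..uL, (uL - s) * ηpp s :=
    (intervalIntegral.integral_add_adjacent_intervals
      (hcont.intervalIntegrable _ _) (hcont.intervalIntegrable _ _)).symm
  have h1 : (∫ s in w..(0:ℝ), (0 - s) * ηpp s) ≤ ∫ s in w..(0:ℝ), (uL - s) * ηpp s := by
    apply intervalIntegral.integral_mono_on hw0.le
      (((continuous_const.sub continuous_id).mul hc).intervalIntegrable _ _)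
      (hcont.intervalIntegrable _ _)
    intro s hs
    simp only [Pi.mul_apply, Pi.sub_apply, id_eq]
    nlinarith [mul_nonneg huL.le (hppnn s)]
  have h2 : 0 ≤ ∫ s in (0:ℝ)..uL, (uL - s) * ηpp s := by
    apply intervalIntegral.integral_nonneg huL.le
    intro s hs
    exact mul_nonneg (by linarith [hs.2]) (hppnn s)
  have hA : ηb uL - ηb w - deriv ηb w * (uL - w) ≥ ηb 0 - ηb w - deriv ηb w * (0 - w) := by
    rw [FuLw, F0w, e0, hsplit]
    linarith [e0 ▸ h1]
  have hB : ηb 0 - ηb w - deriv ηb w * (0 - w) ≥ w ^ 2 / 2 := by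
    rw [F0w, e0]
  refine ⟨hA, hB, ?_⟩
  intro hδw
  have hpos : 0 < (uL - uR) ^ 2 := by
    have hne : uL - uR ≠ 0 := by linarith
    exact lt_of_le_of_ne (sq_nonneg _) (Ne.symm (pow_ne_zero 2 hne))
  rw [lt_div_iff₀ hpos] at hδw
  rw [FuLuR, eR]
  nlinarith [hA, hB]
end

section
/- (Dissipation formula, scalar case) For a scalar conservation law with flux f and strictly convex entropy η, let σ(s) := (f(u_- + s) - f(u_-))/s be the shock speed along the shock curve from u_-, with σ(0) = f'(u_-). Then for u_+ = u_- + s₀ and any v: [q(u_+;v) - σ(s₀)η(u_+|v)] - [q(u_-;v) - σ(s₀)η(u_-|v)] = ∫₀^{s₀} σ'(t) η(u_- | u_- + t) dt. -/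
open MeasureTheory intervalIntegral Set Filter Topology

/-- Dissipation formula, scalar case: with σ(s) = (f(u₋+s)-f(u₋))/s (σ(0) = f'(u₋)) and
u₊ = u₋ + s₀, for every v:
[q(u₊;v) - σ(s₀)η(u₊|v)] - [q(u₋;v) - σ(s₀)η(u₋|v)] = ∫₀^{s₀} σ'(t) η(u₋|u₋+t) dt. -/
theorem stmt_17 (f η q : ℝ → ℝ)
    (hf : ContDiff ℝ 2 f) (hη : ContDiff ℝ 2 η) (hq : ContDiff ℝ 2 q)
    (hconv : ∀ x : ℝ, 0 < deriv (deriv η) x)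
    (hpair : ∀ x : ℝ, deriv q x = deriv η x * deriv f x)
    (um s₀ : ℝ) (σ : ℝ → ℝ)
    (hσ : ∀ s : ℝ, s ≠ 0 → σ s = (f (um + s) - f um) / s) (hσ0 : σ 0 = deriv f um) :
    ∀ v : ℝ,
      ((q (um + s₀) - q v - deriv η v * (f (um + s₀) - f v))
          - σ s₀ * (η (um + s₀) - η v - deriv η v * (um + s₀ - v)))
      - ((q um - q v - deriv η v * (f um - f v)) - σ s₀ * (η um - η v - deriv η v * (um - v)))
      = ∫ t in (0 : ℝ)..s₀,
          deriv σ t * (η um - η (um + t) - deriv η (um + t) * (um - (um + t))) := by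
  intro v
  have hfd : Differentiable ℝ f := hf.differentiable two_ne_zero
  have hηd : Differentiable ℝ η := hη.differentiable two_ne_zero
  have hqd : Differentiable ℝ q := hq.differentiable two_ne_zero
  have hfd' : Continuous (deriv f) := hf.continuous_deriv one_le_two
  have hηd' : Continuous (deriv η) := hη.continuous_deriv one_le_two
  -- derivatives of shifted functions
  have hgd : ∀ (F : ℝ → ℝ), Differentiable ℝ F →
      ∀ t : ℝ, HasDerivAt (fun s => F (um + s)) (deriv F (um + t)) t := by
    intro F hF t
    exact ((hF (um + t)).hasDerivAt.comp t ((hasDerivAt_id t).const_add um)).congr_deriv (mul_one _)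
  -- continuity of σ at 0
  have hσ0cont : ContinuousAt σ 0 := by
    rw [← continuousWithinAt_compl_self]
    have h1 : Tendsto (slope (fun s => f (um + s)) 0) (𝓝[≠] 0) (𝓝 (deriv f um)) := by
      have h := hgd f hfd 0
      rw [hasDerivAt_iff_tendsto_slope] at h
      simpa using h
    have h2 : σ =ᶠ[𝓝[≠] (0:ℝ)] slope (fun s => f (um + s)) 0 := by
      filter_upwards [self_mem_nhdsWithin] with t ht
      simp only [Set.mem_compl_iff, Set.mem_singleton_iff] at ht
      rw [hσ t ht, slope_def_field]
      simp [div_eq_div_iff]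
    have := h1.congr' h2.symm
    rwa [ContinuousWithinAt, hσ0]
  -- continuity of σ
  have hσcont : Continuous σ := by
    rw [continuous_iff_continuousAt]
    intro t
    rcases eq_or_ne t 0 with rfl | ht
    · exact hσ0cont
    · have hev : (fun s => (f (um + s) - f um) / s) =ᶠ[𝓝 t] σ := by
        filter_upwards [isOpen_compl_singleton.mem_nhds ht] with s hs
        exact (hσ s hs).symm
      have hc : ContinuousAt (fun s => (f (um + s) - f um) / s) t :=
        (((hfd.continuous.comp (continuous_const.add continuous_id)).sub
          continuous_const).continuousAt).div continuousAt_id ht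
      exact hc.congr hev
  -- the slope function for η
  set ρ : ℝ → ℝ := fun t => if t = 0 then deriv η um else (η (um + t) - η um) / t with hρ
  have hρ0cont : ContinuousAt ρ 0 := by
    rw [← continuousWithinAt_compl_self]
    have h1 : Tendsto (slope (fun s => η (um + s)) 0) (𝓝[≠] 0) (𝓝 (deriv η um)) := by
      have h := hgd η hηd 0
      rw [hasDerivAt_iff_tendsto_slope] at h
      simpa using h
    have h2 : ρ =ᶠ[𝓝[≠] (0:ℝ)] slope (fun s => η (um + s)) 0 := by
      filter_upwards [self_mem_nhdsWithin] with t ht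
      simp only [Set.mem_compl_iff, Set.mem_singleton_iff] at ht
      rw [hρ]
      simp only [if_neg ht, slope_def_field]
      simp [div_eq_div_iff]
    have h3 := h1.congr' h2.symm
    have : ρ 0 = deriv η um := by simp [hρ]
    rwa [ContinuousWithinAt, this]
  have hρcont : Continuous ρ := by
    rw [continuous_iff_continuousAt]
    intro t
    rcases eq_or_ne t 0 with rfl | ht
    · exact hρ0cont
    · have hev : (fun s => (η (um + s) - η um) / s) =ᶠ[𝓝 t] ρ := by
        filter_upwards [isOpen_compl_singleton.mem_nhds ht] with s hs
        simp only [Set.mem_compl_iff, Set.mem_singleton_iff] at hs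
        simp [hρ, if_neg hs]
      have hc : ContinuousAt (fun s => (η (um + s) - η um) / s) t :=
        (((hηd.continuous.comp (continuous_const.add continuous_id)).sub
          continuous_const).continuousAt).div continuousAt_id ht
      exact hc.congr hev
  -- derivative of σ away from 0
  have hσderiv : ∀ t : ℝ, t ≠ 0 →
      HasDerivAt σ ((deriv f (um + t) - σ t) / t) t := by
    intro t ht
    have h1 : HasDerivAt (fun s => (f (um + s) - f um) / s)
        ((deriv f (um + t) * t - (f (um + t) - f um) * 1) / t ^ 2) t :=
      ((hgd f hfd t).sub_const (f um)).div (hasDerivAt_id t) ht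
    have hev : σ =ᶠ[𝓝 t] fun s => (f (um + s) - f um) / s := by
      filter_upwards [isOpen_compl_singleton.mem_nhds ht] with s hs
      exact hσ s hs
    have h2 := h1.congr_of_eventuallyEq hev
    refine h2.congr_deriv ?_
    rw [hσ t ht]
    field_simp
    try left
    try ring
    try trivial
  -- the integrand
  set I : ℝ → ℝ := fun t =>
      deriv σ t * (η um - η (um + t) - deriv η (um + t) * (um - (um + t))) with hI
  set Φ : ℝ → ℝ := fun t => (deriv f (um + t) - σ t) * (deriv η (um + t) - ρ t) with hΦ
  have hIΦ : ∀ t : ℝ, t ≠ 0 → I t = Φ t := by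
    intro t ht
    have hd : deriv σ t = (deriv f (um + t) - σ t) / t := (hσderiv t ht).deriv
    rw [hI, hΦ]
    simp only [hd, hρ, if_neg ht]
    field_simp
    try left
    try ring
    try trivial
  have hΦcont : Continuous Φ := by
    apply Continuous.mul
    · exact (hfd'.comp (continuous_const.add continuous_id)).sub hσcont
    · exact (hηd'.comp (continuous_const.add continuous_id)).sub hρcont
  -- a.e. equality and integrability
  have h0ae : ∀ᵐ t : ℝ, t ≠ 0 := by
    have : (volume : Measure ℝ) {(0:ℝ)} = 0 := measure_singleton 0
    rw [ae_iff]
    simpa [not_not] using this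
  have hae : I =ᵐ[volume] Φ := by
    filter_upwards [h0ae] with t ht
    exact hIΦ t ht
  have hIint : IntervalIntegrable I volume 0 s₀ := by
    have this : IntervalIntegrable Φ volume 0 s₀ := hΦcont.intervalIntegrable 0 s₀
    rw [intervalIntegrable_iff] at this ⊢
    exact this.congr (ae_restrict_of_ae hae.symm)
  -- the primitive
  set G : ℝ → ℝ := fun t => q (um + t) - σ t * (η (um + t) - η um) with hG
  have hGcont : Continuous G := by
    apply Continuous.sub
    · exact hqd.continuous.comp (continuous_const.add continuous_id)
    · exact hσcont.mul ((hηd.continuous.comp (continuous_const.add continuous_id)).sub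
        continuous_const)
  have hGderiv : ∀ t : ℝ, t ≠ 0 → HasDerivAt G (I t) t := by
    intro t ht
    have h1 : HasDerivAt (fun s => q (um + s)) (deriv q (um + t)) t := hgd q hqd t
    have h2 : HasDerivAt (fun s => η (um + s) - η um) (deriv η (um + t)) t :=
      (hgd η hηd t).sub_const (η um)
    have h3 : HasDerivAt σ ((deriv f (um + t) - σ t) / t) t := hσderiv t ht
    have h4 := h1.sub (h3.mul h2)
    refine h4.congr_deriv ?_
    have hd : deriv σ t = (deriv f (um + t) - σ t) / t := (hσderiv t ht).deriv
    simp only [hI, hd, hpair (um + t)]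
    field_simp
    ring
  -- FTC
  have hftc : ∫ t in (0:ℝ)..s₀, I t = G s₀ - G 0 := by
    apply intervalIntegral.integral_eq_sub_of_hasDeriv_right
      (hGcont.continuousOn) _ hIint
    intro x hx
    have hx0 : x ≠ 0 := by
      rintro rfl
      rcases hx with ⟨h1, h2⟩
      rw [min_lt_iff] at h1
      rw [lt_max_iff] at h2
      rcases h1 with h | h <;> rcases h2 with h' | h' <;> linarith
    exact (hGderiv x hx0).hasDerivWithinAt
  have hkey : f (um + s₀) - f um = σ s₀ * s₀ := by
    rcases eq_or_ne s₀ 0 with rfl | h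
    · simp
    · rw [hσ s₀ h]; field_simp
  have hG0 : G 0 = q um := by simp [hG]
  calc ((q (um + s₀) - q v - deriv η v * (f (um + s₀) - f v))
          - σ s₀ * (η (um + s₀) - η v - deriv η v * (um + s₀ - v)))
      - ((q um - q v - deriv η v * (f um - f v)) - σ s₀ * (η um - η v - deriv η v * (um - v)))
      = G s₀ - G 0 := by
        rw [hG0, hG]
        simp only
        linear_combination (-(deriv η v)) * hkey
    _ = ∫ t in (0:ℝ)..s₀, I t := hftc.symm
    _ = _ := by rw [hI]
end
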